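/- arXiv:2112.10685 — 3 statements merged into one kernel-verified Lean document; each statement's English description precedes it below -/
import Mathlib

section
/- The family (C_η)_{η∈[0,1]} is a valid nested set of critical regions: if η₁ ≤ η₂ then C_{η₂} ⊆ C_{η₁}, and for every h ∈ I and every η ∈ [0,1], μ_h(C_η) ≤ 1 − η. -/
open MeasureTheory

/-- The family `(C_η)` is a valid nested set of critical regions:
if `η₁ ≤ η₂` then `C η₂ ⊆ C η₁`, and for every `h` and `η ∈ [0,1]`,
`μ h (C η) ≤ 1 - η`. -/
theorem stmt4 {X : Type*} [MeasurableSpace X] {I : Type*} [Nonempty I]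
    (μ : I → Measure X) (hμ : ∀ h, IsProbabilityMeasure (μ h))
    (q : X → ℝ) (hq : Measurable q) (hq0 : ∀ x, 0 ≤ q x) (hq1 : ∀ x, q x ≤ 1)
    (B B₁ : ℝ → Set X)
    (hB : ∀ p, B p = {x | p < q x}) (hB₁ : ∀ p, B₁ p = {x | p ≤ q x})
    (f f₁ : ℝ → ℝ)
    (hf : ∀ p, f p = 1 - ⨆ h, (μ h (B p)).toReal)
    (hf₁ : ∀ p, f₁ p = 1 - ⨆ h, (μ h (B₁ p)).toReal)
    (g : ℝ → ℝ) (hg : ∀ η, g η = sInf {p | p ∈ Set.Icc (0:ℝ) 1 ∧ η ≤ f p})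
    (C : ℝ → Set X)
    (hC : ∀ η, C η = if η ≤ f₁ (g η) then B₁ (g η) else B (g η)) :
    (∀ η₁ η₂ : ℝ, η₁ ∈ Set.Icc (0:ℝ) 1 → η₂ ∈ Set.Icc (0:ℝ) 1 → η₁ ≤ η₂ →
      C η₂ ⊆ C η₁) ∧
    (∀ h : I, ∀ η ∈ Set.Icc (0:ℝ) 1, (μ h (C η)).toReal ≤ 1 - η) := by
  haveI : ∀ h, IsFiniteMeasure (μ h) := fun h => have := hμ h; inferInstance
  -- boundedness of the sup
  have hbdd : ∀ s : Set X, BddAbove (Set.range fun h => (μ h s).toReal) := by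
    intro s
    refine ⟨1, ?_⟩
    rintro _ ⟨h, rfl⟩
    calc (μ h s).toReal ≤ (μ h Set.univ).toReal :=
          ENNReal.toReal_mono (measure_ne_top _ _) (measure_mono (Set.subset_univ s))
      _ = 1 := by simp
  -- 1 belongs to the defining set
  have hSne : ∀ η : ℝ, η ≤ 1 → (1:ℝ) ∈ {p | p ∈ Set.Icc (0:ℝ) 1 ∧ η ≤ f p} := by
    intro η hη
    refine ⟨⟨zero_le_one, le_refl 1⟩, ?_⟩
    have hB1 : B 1 = ∅ := by
      rw [hB]; ext x; simp only [Set.mem_setOf_eq, Set.mem_empty_iff_false, iff_false, not_lt]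
      exact hq1 x
    rw [hf, hB1]
    simp only [measure_empty, ENNReal.toReal_zero, ciSup_const]
    linarith
  have hSbdd : ∀ η : ℝ, BddBelow {p | p ∈ Set.Icc (0:ℝ) 1 ∧ η ≤ f p} :=
    fun η => ⟨0, fun p hp => hp.1.1⟩
  have hBB1 : ∀ p, B p ⊆ B₁ p := by
    intro p x hx
    simp only [hB, Set.mem_setOf_eq] at hx
    simp only [hB₁, Set.mem_setOf_eq]
    linarith
  -- key coverage estimate
  have hkey : ∀ η ∈ Set.Icc (0:ℝ) 1, ∀ h, μ h (B (g η)) ≤ ENNReal.ofReal (1 - η) := by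
    intro η hη h
    have hU : B (g η) = ⋃ n : ℕ, B (g η + 1/(n+1)) := by
      ext x
      simp only [hB, Set.mem_setOf_eq, Set.mem_iUnion]
      constructor
      · intro hx
        obtain ⟨n, hn⟩ := exists_nat_one_div_lt (sub_pos.mpr hx)
        exact ⟨n, by push_cast at hn ⊢; linarith⟩
      · rintro ⟨n, hn⟩
        have hpos : (0:ℝ) < 1/((n:ℝ)+1) := by positivity
        linarith
    have hmono : Monotone (fun n : ℕ => B (g η + 1/((n:ℝ)+1))) := by
      intro n m hnm x hx
      simp only [hB, Set.mem_setOf_eq] at hx ⊢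
      have h1 : (1:ℝ)/((m:ℝ)+1) ≤ 1/((n:ℝ)+1) := by
        apply one_div_le_one_div_of_le
        · positivity
        · exact_mod_cast Nat.succ_le_succ hnm
      linarith
    rw [hU, hmono.directed_le.measure_iUnion]
    refine iSup_le fun n => ?_
    have hpos : (0:ℝ) < 1/((n:ℝ)+1) := by positivity
    obtain ⟨p, hpS, hp⟩ := exists_lt_of_csInf_lt (s := {p | p ∈ Set.Icc (0:ℝ) 1 ∧ η ≤ f p})
      ⟨1, hSne η hη.2⟩ (show sInf _ < g η + 1/((n:ℝ)+1) by rw [← hg]; linarith)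
    have hsub : B (g η + 1/((n:ℝ)+1)) ⊆ B p := by
      intro x hx
      simp only [hB, Set.mem_setOf_eq] at hx ⊢
      linarith
    refine le_trans (measure_mono hsub) ?_
    have h1 : (μ h (B p)).toReal ≤ 1 - η := by
      have h2 : (μ h (B p)).toReal ≤ ⨆ h', (μ h' (B p)).toReal := le_ciSup (hbdd (B p)) h
      have h3 := hf p
      have h4 := hpS.2
      linarith
    calc μ h (B p) = ENNReal.ofReal (μ h (B p)).toReal :=
          (ENNReal.ofReal_toReal (measure_ne_top _ _)).symm
      _ ≤ ENNReal.ofReal (1 - η) := ENNReal.ofReal_le_ofReal h1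
  constructor
  · -- nestedness
    intro η₁ η₂ hη₁ hη₂ h12
    have hg12 : g η₁ ≤ g η₂ := by
      rw [hg, hg]
      exact csInf_le_csInf (hSbdd η₁) ⟨1, hSne η₂ hη₂.2⟩
        (fun p hp => ⟨hp.1, le_trans h12 hp.2⟩)
    rcases lt_or_eq_of_le hg12 with hlt | heq
    · have hsub2 : C η₂ ⊆ B₁ (g η₂) := by
        rw [hC]; split_ifs
        · exact subset_rfl
        · exact hBB1 _
      have hsub1 : B (g η₁) ⊆ C η₁ := by
        rw [hC]; split_ifs
        · exact hBB1 _
        · exact subset_rfl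
      have hmid : B₁ (g η₂) ⊆ B (g η₁) := by
        intro x hx
        simp only [hB₁, Set.mem_setOf_eq] at hx
        simp only [hB, Set.mem_setOf_eq]
        linarith
      exact hsub2.trans (hmid.trans hsub1)
    · rw [hC, hC, ← heq]
      split_ifs with h2 h1 h1
      · exact subset_rfl
      · exact absurd (le_trans h12 h2) h1
      · exact hBB1 _
      · exact subset_rfl
  · -- coverage
    intro h η hη
    rw [hC]
    split_ifs with hcase
    · have h1 : (μ h (B₁ (g η))).toReal ≤ ⨆ h', (μ h' (B₁ (g η))).toReal :=
        le_ciSup (hbdd _) h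
      have h2 := hf₁ (g η)
      linarith
    · exact ENNReal.toReal_le_of_le_ofReal (by linarith [hη.2]) (hkey η hη h)
end

section
/- For every η ∈ [0,1], ζ₀(η) ≤ η ≤ ζ₁(η). -/
open MeasureTheory

/-- For every `η ∈ [0,1]`, `ζ₀ η ≤ η ≤ ζ₁ η`. -/
theorem stmt5 {X : Type*} [MeasurableSpace X] {I : Type*} [Nonempty I]
    (μ : I → Measure X) (hμ : ∀ h, IsProbabilityMeasure (μ h))
    (q : X → ℝ) (hq : Measurable q) (hq0 : ∀ x, 0 ≤ q x) (hq1 : ∀ x, q x ≤ 1)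
    (B B₁ : ℝ → Set X)
    (hB : ∀ p, B p = {x | p < q x}) (hB₁ : ∀ p, B₁ p = {x | p ≤ q x})
    (f f₁ : ℝ → ℝ)
    (hf : ∀ p, f p = 1 - ⨆ h, (μ h (B p)).toReal)
    (hf₁ : ∀ p, f₁ p = 1 - ⨆ h, (μ h (B₁ p)).toReal)
    (g : ℝ → ℝ) (hg : ∀ η, g η = sInf {p | p ∈ Set.Icc (0:ℝ) 1 ∧ η ≤ f p})
    (C : ℝ → Set X)
    (hC : ∀ η, C η = if η ≤ f₁ (g η) then B₁ (g η) else B (g η))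
    (S : ℝ → Set ℝ)
    (hS : ∀ η, S η = {η' | η' ∈ Set.Ico (0:ℝ) η ∧ C η ⊂ C η'})
    (ζ₀ ζ₁ : ℝ → ℝ)
    (hζ₁ : ∀ η, ζ₁ η = 1 - ⨆ h, (μ h (C η)).toReal)
    (hζ₀ : ∀ η, ζ₀ η =
      sSup (insert 0 ((fun η' => 1 - ⨆ h, (μ h (C η')).toReal) '' S η))) :
    ∀ η ∈ Set.Icc (0:ℝ) 1, ζ₀ η ≤ η ∧ η ≤ ζ₁ η := by
  intro η hηmem
  obtain ⟨hη0, hη1⟩ := hηmem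
  -- abbreviation m
  have hbdd : ∀ A : Set X, BddAbove (Set.range fun h => (μ h A).toReal) := by
    intro A
    refine ⟨1, ?_⟩
    rintro x ⟨h, rfl⟩
    haveI := hμ h
    have h1 : μ h A ≤ 1 := prob_le_one
    calc (μ h A).toReal ≤ (1 : ENNReal).toReal :=
          ENNReal.toReal_mono ENNReal.one_ne_top h1
      _ = 1 := ENNReal.toReal_one
  set m : Set X → ℝ := fun A => ⨆ h, (μ h A).toReal with hm
  have hmono : ∀ A A' : Set X, A ⊆ A' → m A ≤ m A' := by
    intro A A' hAA
    refine ciSup_le fun h => ?_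
    haveI := hμ h
    refine le_trans ?_ (le_ciSup (hbdd A') h)
    exact ENNReal.toReal_mono (measure_ne_top _ _) (measure_mono hAA)
  have hfm : ∀ p, f p = 1 - m (B p) := hf
  have hfm₁ : ∀ p, f₁ p = 1 - m (B₁ p) := hf₁
  -- B monotone
  have hBmono : ∀ p p' : ℝ, p ≤ p' → B p' ⊆ B p := by
    intro p p' hpp'
    rw [hB, hB]
    intro x hx
    exact lt_of_le_of_lt hpp' hx
  have hBB₁ : ∀ p, B p ⊆ B₁ p := by
    intro p
    rw [hB, hB₁]
    intro x hx
    simp only [Set.mem_setOf_eq] at hx ⊢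
    exact le_of_lt hx
  have hfmono : ∀ p p' : ℝ, p ≤ p' → f p ≤ f p' := by
    intro p p' h
    have := hmono _ _ (hBmono p p' h)
    rw [hfm, hfm]
    linarith
  have hf₁lef : ∀ p, f₁ p ≤ f p := by
    intro p
    have := hmono _ _ (hBB₁ p)
    rw [hfm, hfm₁]
    linarith
  -- the defining set for g
  set T : ℝ → Set ℝ := fun η₀ => {p | p ∈ Set.Icc (0:ℝ) 1 ∧ η₀ ≤ f p} with hT
  have hgT : ∀ η₀, g η₀ = sInf (T η₀) := hg
  have hf1 : f 1 = 1 := by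
    have hB1 : B 1 = ∅ := by
      rw [hB]
      ext x
      simp only [Set.mem_setOf_eq, Set.mem_empty_iff_false, iff_false, not_lt]
      exact hq1 x
    have hm0 : m (B 1) = 0 := by
      simp [hm, hB1]
    rw [hfm, hm0]
    ring
  have hTne : ∀ η₀ : ℝ, η₀ ≤ 1 → (1:ℝ) ∈ T η₀ := by
    intro η₀ hη₀
    exact ⟨⟨zero_le_one, le_refl 1⟩, le_of_le_of_eq hη₀ hf1.symm⟩
  have hTbdd : ∀ η₀ : ℝ, BddBelow (T η₀) := by
    intro η₀
    exact ⟨0, fun p hp => hp.1.1⟩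
  have hgmem : ∀ η₀ : ℝ, η₀ ≤ 1 → g η₀ ∈ Set.Icc (0:ℝ) 1 := by
    intro η₀ hη₀
    constructor
    · rw [hgT]
      exact le_csInf ⟨1, hTne η₀ hη₀⟩ fun p hp => hp.1.1
    · rw [hgT]
      exact csInf_le (hTbdd η₀) (hTne η₀ hη₀)
  -- key: η ≤ f (g η)
  have hkey : ∀ η₀ : ℝ, η₀ ≤ 1 → η₀ ≤ f (g η₀) := by
    intro η₀ hη₀
    set p₀ := g η₀ with hp₀
    -- for p > p₀, η₀ ≤ f p
    have hstep : ∀ p : ℝ, p₀ < p → η₀ ≤ f p := by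
      intro p hp
      rw [hp₀, hgT] at hp
      obtain ⟨p', hp'T, hp'lt⟩ := exists_lt_of_csInf_lt ⟨1, hTne η₀ hη₀⟩ hp
      exact le_trans hp'T.2 (hfmono p' p (le_of_lt hp'lt))
    set A : ℕ → Set X := fun n => B (p₀ + 1 / (n + 1)) with hA
    have hAmono : Monotone A := by
      intro n k hnk
      apply hBmono
      have : (1:ℝ) / (k + 1) ≤ 1 / (n + 1) := by
        apply one_div_le_one_div_of_le
        · positivity
        · have : (n:ℝ) ≤ k := Nat.cast_le.mpr hnk
          linarith
      linarith
    have hUnion : (⋃ n, A n) = B p₀ := by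
      ext x
      simp only [Set.mem_iUnion, hA, hB, Set.mem_setOf_eq]
      constructor
      · rintro ⟨n, hn⟩
        have : (0:ℝ) < 1 / (n + 1) := by positivity
        linarith
      · intro hx
        obtain ⟨n, hn⟩ := exists_nat_one_div_lt (by linarith : (0:ℝ) < q x - p₀)
        exact ⟨n, by linarith⟩
    have hper : ∀ h : I, (μ h (B p₀)).toReal ≤ 1 - η₀ := by
      intro h
      haveI := hμ h
      have hsup : μ h (B p₀) = ⨆ n, μ h (A n) := by
        rw [← hUnion]
        exact hAmono.directed_le.measure_iUnion
      have hle : μ h (B p₀) ≤ ENNReal.ofReal (1 - η₀) := by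
        rw [hsup]
        refine iSup_le fun n => ?_
        have hfn : η₀ ≤ f (p₀ + 1 / (n + 1)) := by
          apply hstep
          have : (0:ℝ) < 1 / ((n:ℝ) + 1) := by positivity
          linarith
        have hmn : m (A n) ≤ 1 - η₀ := by
          have := hfm (p₀ + 1 / (n + 1))
          simp only [hA]
          linarith
        have htr : (μ h (A n)).toReal ≤ 1 - η₀ :=
          le_trans (le_ciSup (hbdd (A n)) h) hmn
        exact (ENNReal.le_ofReal_iff_toReal_le (measure_ne_top _ _)
          (by linarith [htr, ENNReal.toReal_nonneg (a := μ h (A n))])).mpr htr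
      exact ENNReal.toReal_le_of_le_ofReal
        (by
          have : (0:ℝ) ≤ (μ h (B p₀)).toReal := ENNReal.toReal_nonneg
          nlinarith [hle, ENNReal.toReal_nonneg (a := μ h (B p₀))]) hle
    have : m (B p₀) ≤ 1 - η₀ := ciSup_le hper
    rw [hfm]
    linarith
  -- slight issue: toReal_le_of_le_ofReal needs 0 ≤ 1 - η₀; we have η₀ ≤ 1
  -- part 2: η ≤ ζ₁ η
  have hpart2 : η ≤ ζ₁ η := by
    rw [hζ₁, hC]
    by_cases hcase : η ≤ f₁ (g η)
    · rw [if_pos hcase]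
      rw [← hf₁]
      exact hcase
    · rw [if_neg hcase, ← hf]
      exact hkey η hη1
  -- part 1: ζ₀ η ≤ η
  have hpart1 : ζ₀ η ≤ η := by
    rw [hζ₀]
    apply Real.sSup_le _ hη0
    intro y hy
    simp only [Set.mem_insert_iff, Set.mem_image] at hy
    rcases hy with rfl | ⟨η', hη'S, rfl⟩
    · exact hη0
    · rw [hS] at hη'S
      obtain ⟨⟨hη'0, hη'lt⟩, hss⟩ := hη'S
      have hη'1 : η' ≤ 1 := le_trans (le_of_lt hη'lt) hη1
      have hgle : g η' ≤ g η := by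
        rw [hgT, hgT]
        apply csInf_le_csInf (hTbdd η') ⟨1, hTne η hη1⟩
        intro p hp
        exact ⟨hp.1, le_trans (le_of_lt hη'lt) hp.2⟩
      have hCsub₁ : ∀ η₀ : ℝ, C η₀ ⊆ B₁ (g η₀) := by
        intro η₀
        rw [hC]
        split
        · exact subset_rfl
        · exact hBB₁ _
      have hgoal : (1 : ℝ) - m (C η') ≤ η := by
        rcases lt_or_eq_of_le hgle with hlt | heq
        · -- g η' < g η, so f (g η') < η
          have hflt : f (g η') < η := by
            by_contra hle
            push_neg at hle
            have hmemT : g η' ∈ T η := ⟨hgmem η' hη'1, hle⟩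
            have : g η ≤ g η' := by
              rw [hgT]
              exact csInf_le (hTbdd η) hmemT
            linarith
          have hsub : B (g η') ⊆ C η' := by
            rw [hC]
            split
            · exact hBB₁ _
            · exact subset_rfl
          have := hmono _ _ hsub
          have := hfm (g η')
          linarith
        · -- g η' = g η
          by_cases hcase : η ≤ f₁ (g η)
          · exfalso
            have hsub : C η' ⊆ C η := by
              rw [hC η, if_pos hcase, ← heq]
              exact hCsub₁ η'
            exact hss.not_subset hsub
          · push_neg at hcase
            have hCη : C η = B (g η) := by
              rw [hC η, if_neg (not_le.mpr hcase)]
            by_cases hcase' : η' ≤ f₁ (g η')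
            · have hCη' : C η' = B₁ (g η) := by
                rw [hC η', if_pos hcase', heq]
              rw [hCη']
              have := hfm₁ (g η)
              linarith
            · exfalso
              have hCη' : C η' = B (g η) := by
                rw [hC η', if_neg hcase', heq]
              exact hss.ne (hCη.trans hCη'.symm)
      exact hgoal
  exact ⟨hpart1, hpart2⟩
end

section
/- (Data Processing Theorem, finite case.) Let z : X → Z with Z a finite type, and define the joint pmf r : T × Z → ℝ by r(t,ζ) = ∑_{x : z(x) = ζ} p(t,x). Then the mutual information of r is at most that of p, i.e. ∑_{(t,ζ): r(t,ζ)>0} r(t,ζ)·log(r(t,ζ)/(r_T(t)·r_Z(ζ))) ≤ ∑_{(t,x): p(t,x)>0} p(t,x)·log(p(t,x)/(p_T(t)·p_X(x))), where r_T and r_Z are the marginals of r. -/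
/-- Mutual information of a joint pmf on a product of finite types:
`I(T;X) = ∑_{(t,x) : p(t,x) > 0} p(t,x) · log (p(t,x) / (p_T(t) · p_X(x)))`. -/
noncomputable def mutualInfo {T X : Type*} [Fintype T] [Fintype X] (p : T × X → ℝ) : ℝ :=
  ∑ tx ∈ Finset.univ.filter (fun tx : T × X => 0 < p tx),
    p tx * Real.log (p tx / ((∑ x, p (tx.1, x)) * (∑ t, p (t, tx.2))))

/-- Data Processing Theorem, finite case. If `z : X → Z` and
`r(t,ζ) = ∑_{x : z x = ζ} p(t,x)`, then the mutual information of `r` is at most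
that of `p`. -/
theorem stmt8 {T X Z : Type*} [Fintype T] [Fintype X] [Fintype Z] [DecidableEq Z]
    (p : T × X → ℝ) (hp0 : ∀ tx, 0 ≤ p tx) (hp1 : ∑ tx : T × X, p tx = 1)
    (z : X → Z) (r : T × Z → ℝ)
    (hr : ∀ t ζ, r (t, ζ) = ∑ x ∈ Finset.univ.filter (fun x => z x = ζ), p (t, x)) :
    mutualInfo r ≤ mutualInfo p := by
  classical
  set A : Finset (T × X) := Finset.univ.filter (fun tx : T × X => 0 < p tx) with hA
  set pT : T → ℝ := fun t => ∑ x, p (t, x) with hpT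
  set pX : X → ℝ := fun x => ∑ t, p (t, x) with hpX
  set rZ : Z → ℝ := fun ζ => ∑ t, r (t, ζ) with hrZdef
  -- basic nonnegativity
  have hr0 : ∀ t ζ, 0 ≤ r (t, ζ) := fun t ζ => by
    rw [hr]; exact Finset.sum_nonneg fun x _ => hp0 _
  have hpX0 : ∀ x, 0 ≤ pX x := fun x => Finset.sum_nonneg fun t _ => hp0 _
  have hrZ0 : ∀ ζ, 0 ≤ rZ ζ := fun ζ => Finset.sum_nonneg fun t _ => hr0 _ _
  -- T-marginal of r equals that of p
  have hrT : ∀ t, (∑ ζ, r (t, ζ)) = pT t := by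
    intro t
    simp only [hr]
    exact Finset.sum_fiberwise Finset.univ z (fun x => p (t, x))
  -- positivity facts on the support of p
  have hppos : ∀ t x, 0 < p (t, x) → 0 < r (t, z x) := by
    intro t x hp
    rw [hr]
    refine lt_of_lt_of_le hp ?_
    exact Finset.single_le_sum (f := fun x' => p (t, x'))
      (fun x' _ => hp0 _) (Finset.mem_filter.2 ⟨Finset.mem_univ _, rfl⟩)
  have hrZpos : ∀ t x, 0 < p (t, x) → 0 < rZ (z x) := by
    intro t x hp
    refine lt_of_lt_of_le (hppos t x hp) ?_
    exact Finset.single_le_sum (f := fun t' => r (t', z x))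
      (fun t' _ => hr0 _ _) (Finset.mem_univ t)
  have hpTpos : ∀ t x, 0 < p (t, x) → 0 < pT t := by
    intro t x hp
    exact lt_of_lt_of_le hp (Finset.single_le_sum (f := fun x' => p (t, x'))
      (fun x' _ => hp0 _) (Finset.mem_univ x))
  have hpXpos : ∀ t x, 0 < p (t, x) → 0 < pX x := by
    intro t x hp
    exact lt_of_lt_of_le hp (Finset.single_le_sum (f := fun t' => p (t', x))
      (fun t' _ => hp0 _) (Finset.mem_univ t))
  -- the "if"-guarded log term
  set L : T → Z → ℝ := fun t ζ =>
    if 0 < r (t, ζ) then Real.log (r (t, ζ) / (pT t * rZ ζ)) else 0 with hL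
  -- Step A: mutualInfo r as a sum over the support of p
  have key : mutualInfo r
      = ∑ tx ∈ A, p tx * Real.log (r (tx.1, z tx.2) / (pT tx.1 * rZ (z tx.2))) := by
    have h1 : mutualInfo r = ∑ tζ : T × Z, r tζ * L tζ.1 tζ.2 := by
      rw [mutualInfo, Finset.sum_filter]
      refine Finset.sum_congr rfl fun tζ _ => ?_
      by_cases h : 0 < r tζ
      · simp only [h, if_true, hL, hrT]
        rfl
      · have : r tζ = 0 := le_antisymm (not_lt.1 h) (hr0 tζ.1 tζ.2)
        simp [hL, h, this]
    have h2 : (∑ tζ : T × Z, r tζ * L tζ.1 tζ.2)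
        = ∑ tx : T × X, p tx * L tx.1 (z tx.2) := by
      rw [Fintype.sum_prod_type, Fintype.sum_prod_type]
      refine Finset.sum_congr rfl fun t _ => ?_
      have : ∀ ζ, r (t, ζ) * L t ζ
          = ∑ x ∈ Finset.univ.filter (fun x => z x = ζ), p (t, x) * L t (z x) := by
        intro ζ
        rw [hr, Finset.sum_mul]
        exact Finset.sum_congr rfl fun x hx => by
          rw [(Finset.mem_filter.1 hx).2]
      simp only [this]
      exact Finset.sum_fiberwise Finset.univ z (fun x => p (t, x) * L t (z x))
    have h3 : (∑ tx : T × X, p tx * L tx.1 (z tx.2))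
        = ∑ tx ∈ A, p tx * Real.log (r (tx.1, z tx.2) / (pT tx.1 * rZ (z tx.2))) := by
      rw [Finset.sum_filter]
      refine Finset.sum_congr rfl fun tx _ => ?_
      by_cases h : 0 < p tx
      · have hrp : 0 < r (tx.1, z tx.2) := hppos tx.1 tx.2 h
        simp [hL, h, hrp]
      · have : p tx = 0 := le_antisymm (not_lt.1 h) (hp0 tx)
        simp [this, h]
    rw [h1, h2, h3]
  have keyp : mutualInfo p
      = ∑ tx ∈ A, p tx * Real.log (p tx / (pT tx.1 * pX tx.2)) := rfl
  rw [key, keyp, ← sub_nonneg, ← Finset.sum_sub_distrib]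
  -- Gibbs: termwise lower bound p - q
  have hterm : ∀ tx ∈ A,
      p tx - pX tx.2 * r (tx.1, z tx.2) / rZ (z tx.2)
        ≤ p tx * Real.log (p tx / (pT tx.1 * pX tx.2))
          - p tx * Real.log (r (tx.1, z tx.2) / (pT tx.1 * rZ (z tx.2))) := by
    intro tx htx
    obtain ⟨t, x⟩ := tx
    have hp : 0 < p (t, x) := (Finset.mem_filter.1 htx).2
    have hrp : 0 < r (t, z x) := hppos t x hp
    have hZ : 0 < rZ (z x) := hrZpos t x hp
    have hT : 0 < pT t := hpTpos t x hp
    have hX : 0 < pX x := hpXpos t x hp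
    set q : ℝ := pX x * r (t, z x) / rZ (z x) with hq
    have hqpos : 0 < q := by positivity
    have hlog : Real.log (p (t, x) / (pT t * pX x))
        - Real.log (r (t, z x) / (pT t * rZ (z x)))
        = Real.log (p (t, x) / q) := by
      rw [Real.log_div hp.ne' (by positivity), Real.log_div hrp.ne' (by positivity),
        Real.log_mul hT.ne' hX.ne', Real.log_mul hT.ne' hZ.ne',
        Real.log_div hp.ne' hqpos.ne', hq,
        Real.log_div (by positivity) hZ.ne', Real.log_mul hX.ne' hrp.ne']
      ring
    rw [← mul_sub, hlog]
    have h1 : Real.log (q / p (t, x)) ≤ q / p (t, x) - 1 :=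
      Real.log_le_sub_one_of_pos (by positivity)
    have h2 : Real.log (p (t, x) / q) = - Real.log (q / p (t, x)) := by
      rw [Real.log_div hp.ne' hqpos.ne', Real.log_div hqpos.ne' hp.ne']; ring
    have h3 : p (t, x) * (q / p (t, x)) = q := by
      field_simp
    nlinarith [mul_le_mul_of_nonneg_left h1 hp.le]
  refine le_trans ?_ (Finset.sum_le_sum hterm)
  rw [Finset.sum_sub_distrib]
  -- ∑_A p = 1
  have hsum_p : ∑ tx ∈ A, p tx = 1 := by
    rw [← hp1]
    refine Finset.sum_subset (Finset.filter_subset _ _) fun tx _ h => ?_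
    have : ¬ 0 < p tx := by
      intro hc; exact h (Finset.mem_filter.2 ⟨Finset.mem_univ _, hc⟩)
    exact le_antisymm (not_lt.1 this) (hp0 tx)
  -- ∑_A q ≤ 1
  have hsum_q : ∑ tx ∈ A, pX tx.2 * r (tx.1, z tx.2) / rZ (z tx.2) ≤ 1 := by
    set Q : T × X → ℝ := fun tx =>
      if 0 < rZ (z tx.2) then pX tx.2 * r (tx.1, z tx.2) / rZ (z tx.2) else 0 with hQ
    have hstep1 : ∑ tx ∈ A, pX tx.2 * r (tx.1, z tx.2) / rZ (z tx.2) = ∑ tx ∈ A, Q tx := by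
      refine Finset.sum_congr rfl fun tx htx => ?_
      have hZ : 0 < rZ (z tx.2) := hrZpos tx.1 tx.2 (Finset.mem_filter.1 htx).2
      simp [hQ, hZ]
    have hstep2 : ∑ tx ∈ A, Q tx ≤ ∑ tx : T × X, Q tx := by
      refine Finset.sum_le_sum_of_subset_of_nonneg (Finset.filter_subset _ _)
        fun tx _ _ => ?_
      simp only [hQ]
      split
      · have h1 : 0 ≤ pX tx.2 := hpX0 _
        have h2 : 0 ≤ r (tx.1, z tx.2) := hr0 _ _
        have h3 : 0 ≤ rZ (z tx.2) := hrZ0 _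
        positivity
      · exact le_rfl
    have hstep3 : ∑ tx : T × X, Q tx ≤ 1 := by
      rw [Fintype.sum_prod_type_right]
      have hinner : ∀ x : X, (∑ t : T, Q (t, x)) ≤ pX x := by
        intro x
        by_cases hZ : 0 < rZ (z x)
        · have : (∑ t : T, Q (t, x)) = pX x * (∑ t : T, r (t, z x)) / rZ (z x) := by
            simp only [hQ, hZ, if_true]
            rw [Finset.mul_sum, Finset.sum_div]
          rw [this]
          have h4 : (∑ t : T, r (t, z x)) = rZ (z x) := rfl
          rw [h4, mul_div_assoc, div_self hZ.ne', mul_one]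
        · simp only [hQ, hZ, if_false]
          simp [hpX0 x]
      refine le_trans (Finset.sum_le_sum fun x _ => hinner x) ?_
      have : ∑ x : X, pX x = 1 := by
        rw [← hp1, Fintype.sum_prod_type_right]
      exact le_of_eq this
    calc ∑ tx ∈ A, pX tx.2 * r (tx.1, z tx.2) / rZ (z tx.2)
        = ∑ tx ∈ A, Q tx := hstep1
      _ ≤ ∑ tx : T × X, Q tx := hstep2
      _ ≤ 1 := hstep3
  linarith
end
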